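/- LMI reformulation of the robust performance constraint (Theorem 1): Let B_u ∈ ℝ^{q_4×q_3}, B_w ∈ ℝ^{q_4×n_w}, y_0, r ∈ ℝ^{q_4}, let Q̄ ∈ ℝ^{q_4×q_4} and R̄ ∈ ℝ^{q_3×q_3} be symmetric positive semidefinite with K := R̄ + B_u^⊤Q̄B_u positive definite, let A_w be a symmetric (1+n_w)×(1+n_w) matrix, and suppose the Slater condition holds: there exists ĝ_w ∈ ℝ^{n_w} with [1; ĝ_w]^⊤ A_w [1; ĝ_w] > 0. Then for any u ∈ ℝ^{q_3} and γ ∈ ℝ, the following are equivalent: (a) for every g_w ∈ ℝ^{n_w} with [1; g_w]^⊤ A_w [1; g_w] ≥ 0, it holds that (B_u u + B_w g_w + y_0 − r)^⊤ Q̄ (B_u u + B_w g_w + y_0 − r) + u^⊤ R̄ u ≤ γ; (b) there exists α ≥ 0 such that the block matrix [[K^{−1}, [u, 0]],[[u, 0]^⊤, Q_g^a(u, γ) − α A_w]] is positive semidefinite, where [u, 0] ∈ ℝ^{q_3×(1+n_w)} denotes the matrix whose first column is u and whose remaining n_w columns are zero. -/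

import Mathlib

open Matrix

/-- The matrix `Q_g^a(u, γ)`. -/
noncomputable def Qga {q3 q4 nw : ℕ} (Bu : Matrix (Fin q4) (Fin q3) ℝ)
    (Bw : Matrix (Fin q4) (Fin nw) ℝ) (y0 r : Fin q4 → ℝ)
    (Qbar : Matrix (Fin q4) (Fin q4) ℝ)
    (u : Fin q3 → ℝ) (γ : ℝ) : Matrix (Fin 1 ⊕ Fin nw) (Fin 1 ⊕ Fin nw) ℝ :=
  let z : Fin q4 → ℝ := Bu.mulVec u + y0 - r
  Matrix.fromBlocks
    (Matrix.of fun _ _ => γ - Bu.mulVec u ⬝ᵥ Qbar.mulVec (y0 - r)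
      - (y0 - r) ⬝ᵥ Qbar.mulVec (Bu.mulVec u) - (y0 - r) ⬝ᵥ Qbar.mulVec (y0 - r))
    (Matrix.of fun _ j => -(z ᵥ* (Qbar * Bw)) j)
    (Matrix.of fun i _ => -((Bwᵀ * Qbar).mulVec z) i)
    (-(Bwᵀ * Qbar * Bw))

/-- The matrix `[u, 0] ∈ ℝ^{q3 × (1 + nw)}`. -/
def uZero {q3 nw : ℕ} (u : Fin q3 → ℝ) : Matrix (Fin q3) (Fin 1 ⊕ Fin nw) ℝ :=
  Matrix.fromCols (Matrix.of fun i _ => u i) 0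


variable {ι : Type*} [Fintype ι]

noncomputable def qf (A : Matrix ι ι ℝ) (x : ι → ℝ) : ℝ := x ⬝ᵥ A *ᵥ x
noncomputable def bl (A : Matrix ι ι ℝ) (x y : ι → ℝ) : ℝ := x ⬝ᵥ A *ᵥ y + y ⬝ᵥ A *ᵥ x

lemma qf_zero (A : Matrix ι ι ℝ) : qf A 0 = 0 := by simp [qf]

lemma qf_smul (A : Matrix ι ι ℝ) (c : ℝ) (x : ι → ℝ) : qf A (c • x) = c^2 * qf A x := by
  simp [qf, Matrix.mulVec_smul, smul_dotProduct, dotProduct_smul, smul_eq_mul]; ring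

lemma qf_combo (C : Matrix ι ι ℝ) (x y : ι → ℝ) (s t : ℝ) :
    qf C (s • x + t • y) = s^2 * qf C x + s*t*(bl C x y) + t^2 * qf C y := by
  simp [qf, bl, Matrix.mulVec_add, Matrix.mulVec_smul, smul_dotProduct, dotProduct_smul,
    dotProduct_add, add_dotProduct, smul_eq_mul]
  ring

-- scaling helper for the a = 0 case
lemma dines_scale (C D : Matrix ι ι ℝ) (v : ι → ℝ) (hv : qf C v = 0) (m : ℝ)
    (h1 : 0 < m / qf D v) (h2 : (m / qf D v) * qf D v = m) :
    ∃ z, qf C z = 0 ∧ qf D z = m := by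
  refine ⟨Real.sqrt (m / qf D v) • v, ?_, ?_⟩
  · rw [qf_smul, hv]; ring
  · rw [qf_smul, Real.sq_sqrt h1.le, h2]

lemma dines_core_aux (C D : Matrix ι ι ℝ) (x y : ι → ℝ) (hC : qf C x = qf C y)
    (hβ : 0 ≤ bl C x y) (m : ℝ) (hm : m ∈ Set.uIcc (qf D x) (qf D y)) :
    ∃ z, qf C z = qf C x ∧ qf D z = m := by
  set a := qf C x with ha
  by_cases ha0 : a = 0
  · -- scaling case
    rw [ha0]
    rcases Set.mem_uIcc.mp hm with ⟨h1, h2⟩ | ⟨h1, h2⟩ <;>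
      rcases lt_trichotomy m 0 with hm0 | hm0 | hm0
    · have hDxneg : qf D x < 0 := lt_of_le_of_lt h1 hm0
      exact dines_scale C D x (by rw [← ha]; exact ha0) m (div_pos_of_neg_of_neg hm0 hDxneg)
        (div_mul_cancel₀ m hDxneg.ne)
    · exact ⟨0, by simp [qf_zero, hm0]⟩
    · have hDypos : 0 < qf D y := lt_of_lt_of_le hm0 h2
      exact dines_scale C D y (by rw [← hC]; exact ha0) m (div_pos hm0 hDypos)
        (div_mul_cancel₀ m hDypos.ne')
    · have hDyneg : qf D y < 0 := lt_of_le_of_lt h1 hm0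
      exact dines_scale C D y (by rw [← hC]; exact ha0) m
        (div_pos_of_neg_of_neg hm0 hDyneg) (div_mul_cancel₀ m hDyneg.ne)
    · exact ⟨0, by simp [qf_zero, hm0]⟩
    · have hDxpos : 0 < qf D x := lt_of_lt_of_le hm0 h2
      exact dines_scale C D x (by rw [← ha]; exact ha0) m (div_pos hm0 hDxpos)
        (div_mul_cancel₀ m hDxpos.ne')
  · -- IVT case
    set β : ℝ := bl C x y / 2 with hβdef
    have hβ' : 0 ≤ β := by positivity
    set w : ℝ → ℝ := fun t => Real.sqrt (a^2*(1-t^2) + β^2*t^2) with hw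
    set sf : ℝ → ℝ := fun t => (w t - β*t)/a with hsf
    set q : ℝ → ℝ := fun t => (sf t)^2 * qf D x + (sf t)*t*(bl D x y) + t^2 * qf D y with hq
    have hwc : Continuous w := by
      apply Real.continuous_sqrt.comp; continuity
    have hsc : Continuous sf := by
      apply Continuous.div_const; exact hwc.sub (by continuity)
    have hqc : Continuous q := by
      apply Continuous.add; apply Continuous.add
      · exact (hsc.pow 2).mul continuous_const
      · exact ((hsc.mul continuous_id).mul continuous_const)
      · exact (continuous_id.pow 2).mul continuous_const
    have hq0 : q 0 = qf D x := by
      have hw0 : w 0 = |a| := by simp [hw, Real.sqrt_sq_eq_abs]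
      have hs0 : (sf 0)^2 = 1 := by
        simp only [hsf, hw0, mul_zero, sub_zero, div_pow, sq_abs]
        exact div_self (pow_ne_zero 2 ha0)
      simp [hq, hs0]
    have hq1 : q 1 = qf D y := by
      have hw1 : w 1 = β := by
        simp only [hw]
        rw [show a^2*(1-(1:ℝ)^2) + β^2*(1:ℝ)^2 = β^2 by ring, Real.sqrt_sq hβ']
      have hs1 : sf 1 = 0 := by simp [hsf, hw1]
      simp [hq, hs1]
    obtain ⟨t, ht, hqt⟩ := intermediate_value_uIcc hqc.continuousOn
      (show m ∈ Set.uIcc (q 0) (q 1) by rw [hq0, hq1]; exact hm)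
    rw [Set.uIcc_of_le (by norm_num : (0:ℝ) ≤ 1)] at ht
    have ht0 : 0 ≤ t := ht.1
    have ht1 : t ≤ 1 := ht.2
    have ht2 : t^2 ≤ 1 := by nlinarith
    have harg : 0 ≤ a^2*(1-t^2) + β^2*t^2 :=
      add_nonneg (mul_nonneg (sq_nonneg a) (by linarith)) (mul_nonneg (sq_nonneg β) (sq_nonneg t))
    have hW2 : (w t)^2 = a^2*(1-t^2) + β^2*t^2 := Real.sq_sqrt harg
    have hbl : bl C x y = 2*β := by rw [hβdef]; ring
    have key : (sf t)^2 * a + (sf t)*t*(bl C x y) + t^2 * a = a := by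
      rw [hbl]
      simp only [hsf]
      field_simp
      nlinarith [hW2]
    refine ⟨sf t • x + t • y, ?_, ?_⟩
    · rw [qf_combo, ← ha, ← hC]
      exact key
    · rw [qf_combo]
      exact hqt

lemma qf_neg (C : Matrix ι ι ℝ) (y : ι → ℝ) : qf C (-y) = qf C y := by
  have := qf_smul C (-1) y
  simpa using this

lemma bl_neg_right (C : Matrix ι ι ℝ) (x y : ι → ℝ) : bl C x (-y) = - bl C x y := by
  simp [bl, Matrix.mulVec_neg, dotProduct_neg, neg_dotProduct]; ring

lemma dines_core (C D : Matrix ι ι ℝ) (x y : ι → ℝ) (hC : qf C x = qf C y) (m : ℝ)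
    (hm : m ∈ Set.uIcc (qf D x) (qf D y)) :
    ∃ z, qf C z = qf C x ∧ qf D z = m := by
  rcases le_or_gt 0 (bl C x y) with h | h
  · exact dines_core_aux C D x y hC h m hm
  · have h1 : qf C x = qf C (-y) := by rw [qf_neg]; exact hC
    have h2 : 0 ≤ bl C x (-y) := by rw [bl_neg_right]; linarith
    have h3 : m ∈ Set.uIcc (qf D x) (qf D (-y)) := by rw [qf_neg]; exact hm
    exact dines_core_aux C D x (-y) h1 h2 m h3

/-- Dines' theorem: the joint range of two real quadratic forms is convex. -/
lemma dines (A B : Matrix ι ι ℝ) :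
    Convex ℝ {p : ℝ × ℝ | ∃ x, p = (qf A x, qf B x)} := by
  rintro p ⟨x, rfl⟩ q ⟨y, rfl⟩ s t hs ht hst
  by_cases hpq : (qf A x, qf B x) = (qf A y, qf B y)
  · simp only [Prod.mk.injEq] at hpq
    obtain ⟨h1, h2⟩ := hpq
    refine ⟨x, ?_⟩
    rw [Prod.ext_iff]
    constructor
    · show s * qf A x + t * qf A y = qf A x
      rw [← h1]; linear_combination qf A x * hst
    · show s * qf B x + t * qf B y = qf B x
      rw [← h2]; linear_combination qf B x * hst
  · set c : ℝ := qf B x - qf B y with hc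
    set d : ℝ := qf A y - qf A x with hd
    have hcd : c^2 + d^2 ≠ 0 := by
      intro h
      apply hpq
      have hc0 : c = 0 := by nlinarith [sq_nonneg c, sq_nonneg d]
      have hd0 : d = 0 := by nlinarith [sq_nonneg c, sq_nonneg d]
      have h1 : qf A x = qf A y := by rw [hd] at hd0; linarith
      have h2 : qf B x = qf B y := by rw [hc] at hc0; linarith
      rw [h1, h2]
    set C := c • A + d • B with hC
    set D := (-d) • A + c • B with hD
    have qfC : ∀ v, qf C v = c * qf A v + d * qf B v := by
      intro v
      simp [hC, qf, Matrix.add_mulVec, Matrix.smul_mulVec, Matrix.neg_mulVec,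
        dotProduct_add, dotProduct_smul, dotProduct_neg, neg_smul, smul_eq_mul]
    have qfD : ∀ v, qf D v = -d * qf A v + c * qf B v := by
      intro v
      simp [hD, qf, Matrix.add_mulVec, Matrix.smul_mulVec, Matrix.neg_mulVec,
        dotProduct_add, dotProduct_smul, dotProduct_neg, neg_smul, smul_eq_mul]
    have hCxy : qf C x = qf C y := by rw [qfC, qfC, hc, hd]; ring
    have e : s * qf D x + t * qf D y - qf D x = t * (qf D y - qf D x) := by
      linear_combination (qf D x) * hst
    have e' : s * qf D x + t * qf D y - qf D y = s * (qf D x - qf D y) := by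
      linear_combination (qf D y) * hst
    have hmem : s * qf D x + t * qf D y ∈ Set.uIcc (qf D x) (qf D y) := by
      rcases le_total (qf D x) (qf D y) with h | h
      · rw [Set.uIcc_of_le h]
        constructor
        · linarith [e, mul_nonneg ht (sub_nonneg.mpr h)]
        · linarith [e', mul_nonneg hs (sub_nonneg.mpr h)]
      · rw [Set.uIcc_of_ge h]
        constructor
        · linarith [e', mul_nonneg hs (sub_nonneg.mpr h)]
        · linarith [e, mul_nonneg ht (sub_nonneg.mpr h)]
    obtain ⟨z, hzC, hzD⟩ := dines_core C D x y hCxy _ hmem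
    have e1 : c * qf A z + d * qf B z = c * (s * qf A x + t * qf A y) + d * (s * qf B x + t * qf B y) := by
      rw [← qfC, hzC, qfC]
      simp only [hc, hd]
      linear_combination (qf B y * qf A x - qf B x * qf A y) * hst
    have e2 : -d * qf A z + c * qf B z = -d * (s * qf A x + t * qf A y) + c * (s * qf B x + t * qf B y) := by
      rw [← qfD, hzD, qfD, qfD]
      ring
    have h3 : (c^2+d^2) * qf A z = (c^2+d^2) * (s * qf A x + t * qf A y) := by
      linear_combination c * e1 - d * e2
    have h4 : (c^2+d^2) * qf B z = (c^2+d^2) * (s * qf B x + t * qf B y) := by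
      linear_combination d * e1 + c * e2
    have hA : qf A z = s * qf A x + t * qf A y := mul_left_cancel₀ hcd h3
    have hB : qf B z = s * qf B x + t * qf B y := mul_left_cancel₀ hcd h4
    refine ⟨z, ?_⟩
    rw [Prod.ext_iff]
    exact ⟨by show s * qf A x + t * qf A y = qf A z; rw [hA], by show s * qf B x + t * qf B y = qf B z; rw [hB]⟩

/-- The S-lemma (Yakubovich). -/
theorem s_lemma (A M : Matrix ι ι ℝ) (hA : A.IsSymm) (hM : M.IsSymm)
    (slater : ∃ xh, 0 < qf A xh) (h : ∀ x, 0 ≤ qf A x → 0 ≤ qf M x) :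
    ∃ α : ℝ, 0 ≤ α ∧ (M - α • A).PosSemidef := by
  classical
  set S : Set (ℝ × ℝ) := {p | ∃ x, p = (qf A x, qf M x)} with hSdef
  have hSconv : Convex ℝ S := dines A M
  set U : Set (ℝ × ℝ) := {p | 0 < p.1 ∧ p.2 < 0} with hUdef
  have hUconv : Convex ℝ U := by
    have h1 : Convex ℝ {p : ℝ × ℝ | 0 < p.1} :=
      convex_halfSpace_gt ⟨fun a b => rfl, fun a b => rfl⟩ 0
    have h2 : Convex ℝ {p : ℝ × ℝ | p.2 < 0} :=
      convex_halfSpace_lt ⟨fun a b => rfl, fun a b => rfl⟩ 0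
    exact h1.inter h2
  have hUopen : IsOpen U :=
    (isOpen_lt continuous_const continuous_fst).inter (isOpen_lt continuous_snd continuous_const)
  have hdisj : Disjoint U S := by
    rw [Set.disjoint_left]
    rintro p ⟨hp1, hp2⟩ ⟨x, rfl⟩
    exact absurd (h x hp1.le) (not_le.mpr hp2)
  obtain ⟨f, ub, hfU, hfS⟩ := geometric_hahn_banach_open hUconv hUopen hSconv hdisj
  set c : ℝ := f (1, 0) with hcdef
  set d : ℝ := f (0, 1) with hddef
  have hf : ∀ a b : ℝ, f (a, b) = a * c + b * d := by
    intro a b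
    have : ((a, b) : ℝ × ℝ) = a • ((1:ℝ), (0:ℝ)) + b • ((0:ℝ), (1:ℝ)) := by
      simp [Prod.ext_iff]
    rw [this, f.map_add, f.map_smul, f.map_smul, smul_eq_mul, smul_eq_mul]
  have hu0 : ub ≤ 0 := by
    have h0 : ((0:ℝ), (0:ℝ)) ∈ S := ⟨0, by simp [qf_zero]⟩
    have := hfS _ h0
    rw [hf] at this
    simpa using this
  have hS' : ∀ x, ub ≤ c * qf A x + d * qf M x := by
    intro x
    have := hfS _ ⟨x, rfl⟩
    rw [hf] at this
    linarith
  have hq : ∀ x, 0 ≤ c * qf A x + d * qf M x := by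
    intro x
    by_contra hneg
    push_neg at hneg
    set v : ℝ := c * qf A x + d * qf M x with hvdef
    have hvneg : v < 0 := hneg
    set L2 : ℝ := (|ub| + 1) / (-v) with hL2def
    have hL2pos : 0 < L2 := div_pos (by positivity) (by linarith)
    have hkey := hS' (Real.sqrt L2 • x)
    rw [qf_smul, qf_smul, Real.sq_sqrt hL2pos.le] at hkey
    have hval : c * (L2 * qf A x) + d * (L2 * qf M x) = L2 * v := by rw [hvdef]; ring
    rw [hval] at hkey
    have : L2 * v = -(|ub| + 1) := by
      have hvne : v ≠ 0 := hvneg.ne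
      rw [hL2def, div_mul_eq_mul_div, div_neg, mul_div_assoc, div_self hvne, mul_one]
    rw [this] at hkey
    have := neg_abs_le ub
    linarith
  have hc : c ≤ 0 := by
    by_contra hcpos
    push_neg at hcpos
    set ε : ℝ := c / (|d| + 1) with hεdef
    have hεpos : 0 < ε := div_pos hcpos (by positivity)
    have hmem : ((1:ℝ), -ε) ∈ U := ⟨by norm_num, by simpa using hεpos⟩
    have := hfU _ hmem
    rw [hf] at this
    have h1 : ε * (|d| + 1) = c := by rw [hεdef]; field_simp
    have h2 : ε * d ≤ ε * |d| := mul_le_mul_of_nonneg_left (le_abs_self d) hεpos.le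
    nlinarith
  have hd : 0 ≤ d := by
    by_contra hdneg
    push_neg at hdneg
    set ε : ℝ := (-d) / (|c| + 1) with hεdef
    have hεpos : 0 < ε := div_pos (by linarith) (by positivity)
    have hmem : (ε, (-1:ℝ)) ∈ U := ⟨hεpos, by norm_num⟩
    have := hfU _ hmem
    rw [hf] at this
    have h1 : ε * (|c| + 1) = -d := by rw [hεdef]; field_simp
    have h2 : ε * (-|c|) ≤ ε * c := mul_le_mul_of_nonneg_left (neg_abs_le c) hεpos.le
    nlinarith
  have hdpos : 0 < d := by
    rcases hd.lt_or_eq with h' | h'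
    · exact h'
    · exfalso
      obtain ⟨xh, hxh⟩ := slater
      have hc0 : c = 0 := by
        have hv := hq xh
        rw [← h'] at hv
        simp at hv
        nlinarith
      have hmem : ((1:ℝ), (-1:ℝ)) ∈ U := ⟨by norm_num, by norm_num⟩
      have := hfU _ hmem
      rw [hf, hc0, ← h'] at this
      simp at this
      linarith
  refine ⟨-c / d, div_nonneg (by linarith) hdpos.le,
    Matrix.PosSemidef.of_dotProduct_mulVec_nonneg ?_ ?_⟩
  · rw [Matrix.IsHermitian, conjTranspose_eq_transpose_of_trivial, Matrix.transpose_sub,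
      Matrix.transpose_smul, hA.eq, hM.eq]
  · intro x
    have hval : star x ⬝ᵥ (M - (-c / d) • A) *ᵥ x = qf M x - (-c / d) * qf A x := by
      simp [qf, Matrix.sub_mulVec, Matrix.smul_mulVec, dotProduct_sub, dotProduct_smul,
        smul_eq_mul, star_trivial]
    rw [hval]
    have heq : qf M x - (-c / d) * qf A x = (c * qf A x + d * qf M x) / d := by
      field_simp
      ring
    rw [heq]
    exact div_nonneg (hq x) hdpos.le

lemma vec_decomp {nw : ℕ} (x : Fin 1 ⊕ Fin nw → ℝ) (h0 : x (Sum.inl 0) = 1) :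
    x = Sum.elim (fun _ => (1:ℝ)) (fun i => x (Sum.inr i)) := by
  funext j
  cases j with
  | inl j => rw [Subsingleton.elim j 0]; simpa using h0
  | inr i => rfl

lemma homogenize {nw : ℕ} (A M : Matrix (Fin 1 ⊕ Fin nw) (Fin 1 ⊕ Fin nw) ℝ)
    (slater : ∃ gh : Fin nw → ℝ, 0 < qf A (Sum.elim (fun _ => 1) gh))
    (h : ∀ g : Fin nw → ℝ,
      0 ≤ qf A (Sum.elim (fun _ => 1) g) → 0 ≤ qf M (Sum.elim (fun _ => 1) g)) :
    ∀ x, 0 ≤ qf A x → 0 ≤ qf M x := by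
  intro x hx
  by_cases ht : x (Sum.inl 0) = 0
  case neg =>
    -- scale to first coordinate 1
    set t : ℝ := x (Sum.inl 0) with htdef
    have hxdec : x = t • Sum.elim (fun _ => (1:ℝ)) (fun i => x (Sum.inr i) / t) := by
      funext j
      cases j with
      | inl j => rw [Subsingleton.elim j 0]; simp [htdef]
      | inr i => simp [mul_div_cancel₀ _ ht]
    have ht2 : 0 < t^2 := by positivity
    rw [hxdec, qf_smul] at hx ⊢
    have hA : 0 ≤ qf A (Sum.elim (fun _ => (1:ℝ)) (fun i => x (Sum.inr i) / t)) := by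
      nlinarith
    exact mul_nonneg ht2.le (h _ hA)
  case pos =>
    by_contra hMx
    push_neg at hMx
    obtain ⟨gh, hgh⟩ := slater
    set yh : Fin 1 ⊕ Fin nw → ℝ := Sum.elim (fun _ => (1:ℝ)) gh with hyh
    set σ : ℝ := if 0 ≤ bl A yh x then 1 else -1 with hσ
    have hσ2 : σ^2 = 1 := by rw [hσ]; split <;> norm_num
    have hσbl : 0 ≤ σ * bl A yh x := by
      rw [hσ]
      by_cases hbl : 0 ≤ bl A yh x
      · rw [if_pos hbl, one_mul]; exact hbl
      · rw [if_neg hbl]; push_neg at hbl; nlinarith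
    have hσblM : σ * bl M yh x ≤ |bl M yh x| := by
      rw [hσ]
      by_cases hbl : 0 ≤ bl A yh x
      · rw [if_pos hbl, one_mul]; exact le_abs_self _
      · rw [if_neg hbl]
        have := neg_abs_le (bl M yh x)
        nlinarith
    set m : ℝ := qf M x with hm
    set Aabs : ℝ := |qf M yh| with hAabs
    set Babs : ℝ := |bl M yh x| with hBabs
    set s : ℝ := (Aabs + Babs + 1) / (-m) + 1 with hs
    have hmneg : m < 0 := hMx
    have hne0 : (0:ℝ) < -m := by linarith
    have hdiv : 0 < (Aabs + Babs + 1) / (-m) := div_pos (by positivity) hne0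
    have hs1 : 1 ≤ s := by rw [hs]; linarith
    have hspos : 0 < s := by linarith
    have hdm : ((Aabs + Babs + 1) / (-m)) * (-m) = Aabs + Babs + 1 :=
      div_mul_cancel₀ _ hne0.ne'
    have hkey : Aabs + Babs < s * (-m) := by
      have hsm : s * (-m) = (Aabs + Babs + 1) + (-m) := by
        rw [hs, add_mul, one_mul, hdm]
      rw [hsm]
      linarith
    -- the perturbed vector has first coordinate 1
    have hfirst : (yh + (σ * s) • x) (Sum.inl 0) = 1 := by
      simp [hyh, ht]
    have hdec := vec_decomp _ hfirst
    have hAy : 0 ≤ qf A (yh + (σ * s) • x) := by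
      have hc := qf_combo A yh x 1 (σ * s)
      simp only [one_smul, one_pow, one_mul, mul_one] at hc
      have h1 : (σ*s)^2 * qf A x = s^2 * σ^2 * qf A x := by ring
      have h2 : 0 ≤ (σ*s)^2 * qf A x := mul_nonneg (sq_nonneg _) hx
      have h3 : 0 ≤ 1 * (σ*s) * bl A yh x := by
        have : 1 * (σ*s) * bl A yh x = s * (σ * bl A yh x) := by ring
        rw [this]
        exact mul_nonneg hspos.le hσbl
      rw [hc]
      have : 0 < qf A yh := hgh
      linarith
    have hMy : 0 ≤ qf M (yh + (σ * s) • x) := by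
      rw [hdec] at hAy ⊢
      exact h _ hAy
    have hc := qf_combo M yh x 1 (σ * s)
    simp only [one_smul, one_pow, one_mul, mul_one] at hc
    rw [hc] at hMy
    -- derive the contradiction
    have f2 : qf M yh ≤ Aabs := le_abs_self _
    have e1 : (σ*s) * bl M yh x ≤ s * Babs := by
      have h1 : (σ*s) * bl M yh x = s * (σ * bl M yh x) := by ring
      rw [h1]
      exact mul_le_mul_of_nonneg_left hσblM hspos.le
    have e2 : s * (Aabs + Babs) < s * (s * (-m)) := by
      exact mul_lt_mul_of_pos_left hkey hspos
    have e4 : Aabs ≤ s * Aabs := le_mul_of_one_le_left (abs_nonneg _) hs1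
    have hsq : (σ*s)^2 * qf M x = s^2 * m := by
      linear_combination s^2 * qf M x * hσ2 - s^2 * hm
    rw [hsq] at hMy
    linarith [hMy, f2, e1, e2, e4]

lemma qf_fromBlocks {nw : ℕ} (c : ℝ) (rowv colv : Fin nw → ℝ)
    (Dm : Matrix (Fin nw) (Fin nw) ℝ) (g : Fin nw → ℝ) :
    qf (Matrix.fromBlocks (Matrix.of fun (_ : Fin 1) (_ : Fin 1) => c)
        (Matrix.of fun _ j => rowv j) (Matrix.of fun i _ => colv i) Dm)
      (Sum.elim (fun _ => (1:ℝ)) g)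
    = c + rowv ⬝ᵥ g + g ⬝ᵥ colv + g ⬝ᵥ Dm *ᵥ g := by
  rw [qf, Matrix.fromBlocks_mulVec, sumElim_dotProduct_sumElim]
  simp [Matrix.mulVec, dotProduct, Fin.sum_univ_one, Finset.mul_sum, Finset.sum_add_distrib,
    mul_add, add_mul]
  ring

lemma uZero_mulVec {q3 nw : ℕ} (u : Fin q3 → ℝ) (g : Fin nw → ℝ) :
    uZero u *ᵥ Sum.elim (fun _ => (1:ℝ)) g = u := by
  rw [uZero, Matrix.fromCols_mulVec_sumElim]
  ext i
  simp [Matrix.mulVec, dotProduct, Fin.sum_univ_one]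

lemma qf_uZero {q3 nw : ℕ} (u : Fin q3 → ℝ) (K : Matrix (Fin q3) (Fin q3) ℝ)
    (g : Fin nw → ℝ) :
    qf ((uZero u)ᵀ * K * uZero u) (Sum.elim (fun _ => (1:ℝ)) g) = u ⬝ᵥ K *ᵥ u := by
  rw [qf]
  rw [show (uZero u)ᵀ * K * uZero u = (uZero u)ᵀ * (K * uZero u) by rw [Matrix.mul_assoc]]
  rw [← Matrix.mulVec_mulVec, ← Matrix.mulVec_mulVec, Matrix.dotProduct_mulVec,
    Matrix.vecMul_transpose, uZero_mulVec]

lemma qfM_eq {q3 q4 nw : ℕ} (Bu : Matrix (Fin q4) (Fin q3) ℝ)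
    (Bw : Matrix (Fin q4) (Fin nw) ℝ) (y0 r : Fin q4 → ℝ)
    (Qbar : Matrix (Fin q4) (Fin q4) ℝ) (Rbar : Matrix (Fin q3) (Fin q3) ℝ)
    (u : Fin q3 → ℝ) (γ : ℝ) (g : Fin nw → ℝ) :
    qf (Qga Bu Bw y0 r Qbar u γ - (uZero u)ᵀ * (Rbar + Buᵀ * Qbar * Bu) * uZero u)
      (Sum.elim (fun _ => (1:ℝ)) g)
    = γ - ((Bu *ᵥ u + Bw *ᵥ g + y0 - r) ⬝ᵥ Qbar *ᵥ (Bu *ᵥ u + Bw *ᵥ g + y0 - r)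
        + u ⬝ᵥ Rbar *ᵥ u) := by
  have hsub : ∀ (X Y : Matrix (Fin 1 ⊕ Fin nw) (Fin 1 ⊕ Fin nw) ℝ) v,
      qf (X - Y) v = qf X v - qf Y v := by
    intros X Y v
    simp [qf, Matrix.sub_mulVec, dotProduct_sub]
  rw [hsub, qf_uZero]
  simp only [Qga]
  rw [qf_fromBlocks]
  have c1 : (fun j => -((Bu *ᵥ u + y0 - r) ᵥ* (Qbar * Bw)) j) ⬝ᵥ g
      = -((Bu *ᵥ u + y0 - r) ⬝ᵥ Qbar *ᵥ (Bw *ᵥ g)) := by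
    show (-((Bu *ᵥ u + y0 - r) ᵥ* (Qbar * Bw))) ⬝ᵥ g = _
    rw [neg_dotProduct, ← Matrix.dotProduct_mulVec, ← Matrix.mulVec_mulVec]
  have c2 : g ⬝ᵥ (fun i => -(((Bwᵀ * Qbar) *ᵥ (Bu *ᵥ u + y0 - r)) i))
      = -((Bw *ᵥ g) ⬝ᵥ Qbar *ᵥ (Bu *ᵥ u + y0 - r)) := by
    show g ⬝ᵥ (-((Bwᵀ * Qbar) *ᵥ (Bu *ᵥ u + y0 - r))) = _
    rw [dotProduct_neg, ← Matrix.mulVec_mulVec, Matrix.dotProduct_mulVec,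
      Matrix.vecMul_transpose]
  have c3 : g ⬝ᵥ (-(Bwᵀ * Qbar * Bw)) *ᵥ g = -((Bw *ᵥ g) ⬝ᵥ Qbar *ᵥ (Bw *ᵥ g)) := by
    rw [Matrix.neg_mulVec, dotProduct_neg, ← Matrix.mulVec_mulVec, ← Matrix.mulVec_mulVec,
      Matrix.dotProduct_mulVec, Matrix.vecMul_transpose]
  have c4 : u ⬝ᵥ (Rbar + Buᵀ * Qbar * Bu) *ᵥ u
      = u ⬝ᵥ Rbar *ᵥ u + (Bu *ᵥ u) ⬝ᵥ Qbar *ᵥ (Bu *ᵥ u) := by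
    rw [Matrix.add_mulVec, dotProduct_add]
    congr 1
    rw [← Matrix.mulVec_mulVec, ← Matrix.mulVec_mulVec, Matrix.dotProduct_mulVec,
      Matrix.vecMul_transpose]
  rw [c1, c2, c3, c4]
  simp only [Matrix.mulVec_add, Matrix.mulVec_sub, dotProduct_add, dotProduct_sub,
    add_dotProduct, sub_dotProduct]
  ring

lemma schur_bridge {q3 nw : ℕ} (K : Matrix (Fin q3) (Fin q3) ℝ) (hK : K.PosDef)
    (P : Matrix (Fin q3) (Fin 1 ⊕ Fin nw) ℝ)
    (D : Matrix (Fin 1 ⊕ Fin nw) (Fin 1 ⊕ Fin nw) ℝ) :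
    (Matrix.fromBlocks K⁻¹ P Pᵀ D).PosSemidef ↔ (D - Pᵀ * K * P).PosSemidef := by
  have hKinv : K⁻¹.PosDef := hK.inv
  haveI : Invertible K⁻¹ := (K⁻¹).invertibleOfIsUnitDet hKinv.det_pos.ne'.isUnit
  have h := Matrix.PosDef.fromBlocks₁₁ (A := K⁻¹) P D hKinv
  rw [Matrix.conjTranspose_eq_transpose_of_trivial,
    Matrix.nonsing_inv_nonsing_inv K hK.det_pos.ne'.isUnit] at h
  exact h

/-- LMI reformulation of the robust performance constraint (Theorem 1): the worst-case
tracking-error bound over all `g_w` satisfying `[1; g_w]ᵀ A_w [1; g_w] ≥ 0` holds iff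
the LMI is feasible for some `α ≥ 0`. -/
theorem lmi_reformulation {q3 q4 nw : ℕ}
    (Bu : Matrix (Fin q4) (Fin q3) ℝ) (Bw : Matrix (Fin q4) (Fin nw) ℝ)
    (y0 r : Fin q4 → ℝ)
    (Qbar : Matrix (Fin q4) (Fin q4) ℝ) (Rbar : Matrix (Fin q3) (Fin q3) ℝ)
    (hQ : Qbar.PosSemidef) (hR : Rbar.PosSemidef)
    (hK : (Rbar + Buᵀ * Qbar * Bu).PosDef)
    (Aw : Matrix (Fin 1 ⊕ Fin nw) (Fin 1 ⊕ Fin nw) ℝ) (hAw : Aw.IsSymm)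
    (hSlater : ∃ ghat : Fin nw → ℝ,
        0 < Sum.elim (fun _ => (1 : ℝ)) ghat ⬝ᵥ Aw.mulVec (Sum.elim (fun _ => (1 : ℝ)) ghat))
    (u : Fin q3 → ℝ) (γ : ℝ) :
    (∀ gw : Fin nw → ℝ,
        0 ≤ Sum.elim (fun _ => (1 : ℝ)) gw ⬝ᵥ Aw.mulVec (Sum.elim (fun _ => (1 : ℝ)) gw) →
        (Bu.mulVec u + Bw.mulVec gw + y0 - r) ⬝ᵥ
            Qbar.mulVec (Bu.mulVec u + Bw.mulVec gw + y0 - r) + u ⬝ᵥ Rbar.mulVec u ≤ γ) ↔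
    (∃ α : ℝ, 0 ≤ α ∧
        (Matrix.fromBlocks (Rbar + Buᵀ * Qbar * Bu)⁻¹ (uZero u) (uZero u)ᵀ
          (Qga Bu Bw y0 r Qbar u γ - α • Aw)).PosSemidef) := by
  set K : Matrix (Fin q3) (Fin q3) ℝ := Rbar + Buᵀ * Qbar * Bu with hKdef
  set P : Matrix (Fin q3) (Fin 1 ⊕ Fin nw) ℝ := uZero u with hPdef
  set Mm : Matrix (Fin 1 ⊕ Fin nw) (Fin 1 ⊕ Fin nw) ℝ :=
    Qga Bu Bw y0 r Qbar u γ - Pᵀ * K * P with hMmdef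
  -- symmetry facts
  have hQs : Qbarᵀ = Qbar := by
    rw [← Matrix.conjTranspose_eq_transpose_of_trivial]; exact hQ.1
  have hRs : Rbarᵀ = Rbar := by
    rw [← Matrix.conjTranspose_eq_transpose_of_trivial]; exact hR.1
  have hKs : Kᵀ = K := by
    rw [hKdef, Matrix.transpose_add, hRs, Matrix.transpose_mul, Matrix.transpose_mul,
      Matrix.transpose_transpose, hQs, Matrix.mul_assoc]
  have hvz : (Bu *ᵥ u + y0 - r) ᵥ* (Qbar * Bw) = (Bwᵀ * Qbar) *ᵥ (Bu *ᵥ u + y0 - r) := by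
    rw [← Matrix.mulVec_transpose, Matrix.transpose_mul, hQs]
  have hQgaSym : (Qga Bu Bw y0 r Qbar u γ).IsSymm := by
    show (Qga Bu Bw y0 r Qbar u γ)ᵀ = Qga Bu Bw y0 r Qbar u γ
    simp only [Qga]
    have e11 : ∀ c : ℝ, (Matrix.of fun (_ : Fin 1) (_ : Fin 1) => c)ᵀ
        = Matrix.of fun (_ : Fin 1) (_ : Fin 1) => c := by
      intro c; ext i j; simp
    have e21 : (Matrix.of fun (_ : Fin 1) j =>
          -((Bu *ᵥ u + y0 - r) ᵥ* (Qbar * Bw)) j)ᵀ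
        = Matrix.of fun i (_ : Fin 1) => -((Bwᵀ * Qbar) *ᵥ (Bu *ᵥ u + y0 - r)) i := by
      ext i j; simp [hvz]
    have e12 : (Matrix.of fun i (_ : Fin 1) =>
          -((Bwᵀ * Qbar) *ᵥ (Bu *ᵥ u + y0 - r)) i)ᵀ
        = Matrix.of fun (_ : Fin 1) j => -((Bu *ᵥ u + y0 - r) ᵥ* (Qbar * Bw)) j := by
      ext i j; simp [hvz]
    have e22 : (-(Bwᵀ * Qbar * Bw))ᵀ = -(Bwᵀ * Qbar * Bw) := by
      rw [Matrix.transpose_neg, Matrix.transpose_mul, Matrix.transpose_mul,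
        Matrix.transpose_transpose, hQs, Matrix.mul_assoc]
    rw [Matrix.fromBlocks_transpose, e11, e12, e21, e22]
  have hMmSym : Mm.IsSymm := by
    show Mmᵀ = Mm
    rw [hMmdef, Matrix.transpose_sub, hQgaSym.eq, Matrix.transpose_mul, Matrix.transpose_mul,
      Matrix.transpose_transpose, hKs, Matrix.mul_assoc]
  have hSlater' : ∃ gh : Fin nw → ℝ, 0 < qf Aw (Sum.elim (fun _ => 1) gh) := hSlater
  have hstar : ∀ v : Fin 1 ⊕ Fin nw → ℝ, star v = v := fun v => funext fun i => star_trivial _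
  constructor
  · intro hobj
    have h' : ∀ g : Fin nw → ℝ,
        0 ≤ qf Aw (Sum.elim (fun _ => 1) g) → 0 ≤ qf Mm (Sum.elim (fun _ => 1) g) := by
      intro g hg
      have h1 := hobj g hg
      have h2 := qfM_eq Bu Bw y0 r Qbar Rbar u γ g
      rw [← hKdef, ← hPdef, ← hMmdef] at h2
      rw [h2]
      linarith
    have himp := homogenize Aw Mm hSlater' h'
    have hSlaterFull : ∃ x, 0 < qf Aw x := by
      obtain ⟨gh, hgh⟩ := hSlater'
      exact ⟨_, hgh⟩
    obtain ⟨α, hα, hpsd⟩ := s_lemma Aw Mm hAw hMmSym hSlaterFull himp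
    refine ⟨α, hα, ?_⟩
    rw [schur_bridge K hK P (Qga Bu Bw y0 r Qbar u γ - α • Aw), sub_right_comm, ← hMmdef]
    exact hpsd
  · rintro ⟨α, hα, hpsd⟩ gw hg
    rw [schur_bridge K hK P (Qga Bu Bw y0 r Qbar u γ - α • Aw), sub_right_comm, ← hMmdef] at hpsd
    have h2 := hpsd.dotProduct_mulVec_nonneg (Sum.elim (fun _ => (1:ℝ)) gw)
    rw [hstar] at h2
    have h3 : (Sum.elim (fun _ => (1:ℝ)) gw) ⬝ᵥ (Mm - α • Aw) *ᵥ (Sum.elim (fun _ => (1:ℝ)) gw)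
        = qf Mm (Sum.elim (fun _ => 1) gw) - α * qf Aw (Sum.elim (fun _ => 1) gw) := by
      simp [qf, Matrix.sub_mulVec, Matrix.smul_mulVec, dotProduct_sub, dotProduct_smul,
        smul_eq_mul]
    rw [h3] at h2
    have h4 := qfM_eq Bu Bw y0 r Qbar Rbar u γ gw
    rw [← hKdef, ← hPdef, ← hMmdef] at h4
    have h5 : (0:ℝ) ≤ α * qf Aw (Sum.elim (fun _ => 1) gw) := mul_nonneg hα hg
    have h6 : 0 ≤ qf Mm (Sum.elim (fun _ => 1) gw) := by linarith
    rw [h4] at h6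
    linarith
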